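/- Let u : ℕ → ℝ, let (h,β) ∈ Γ(u) be decreasing from N ∈ ℕ, and let j, k ∈ S(u,h) with N ≤ j ≤ k. If u_j ≤ u_k, then F_u(k,h,β) ≤ F_u(j,h,β). -/
import Mathlib


open Set Filter

/-- Ω([0,1]): functions ℝ → ℝ strictly increasing and continuous on [0,1]. -/
def OmegaFun (f : ℝ → ℝ) : Prop :=
  StrictMonoOn f (Set.Icc 0 1) ∧ ContinuousOn f (Set.Icc 0 1)

/-- (h,β) ∈ Γ(u): h k ∈ Ω([0,1]), β k ∈ (0,1) and u k ≤ h k (β k ^ k) for all k. -/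
def InGamma (u : ℕ → ℝ) (h : ℕ → ℝ → ℝ) (β : ℕ → ℝ) : Prop :=
  (∀ k, OmegaFun (h k)) ∧ (∀ k, β k ∈ Set.Ioo (0:ℝ) 1) ∧ (∀ k, u k ≤ h k (β k ^ k))

/-- (h,β) is decreasing from N. -/
def DecreasingFrom (h : ℕ → ℝ → ℝ) (β : ℕ → ℝ) (N : ℕ) : Prop :=
  ∀ n, N ≤ n → (∀ x ∈ Set.Icc (0:ℝ) 1, h (n+1) x ≤ h n x) ∧ β (n+1) ≤ β n

/-- monotonicity of the upper bound functional: N ≤ j ≤ k, u j ≤ u k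
implies F_u(k,h,β) ≤ F_u(j,h,β). -/
theorem upper_bound_functional_antitone (u : ℕ → ℝ) (h : ℕ → ℝ → ℝ) (β : ℕ → ℝ)
    (N : ℕ) (hΓ : InGamma u h β) (hdec : DecreasingFrom h β N)
    (j k : ℕ) (hNj : N ≤ j) (hjk : j ≤ k)
    (hjS : h j 0 < u j) (hkS : h k 0 < u k) (hujk : u j ≤ u k)
    (xj : ℝ) (hxj : xj ∈ Set.Ioc (0:ℝ) 1) (hhxj : h j xj = u j)
    (xk : ℝ) (hxk : xk ∈ Set.Ioc (0:ℝ) 1) (hhxk : h k xk = u k) :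
    Real.log xk / Real.log (β k) ≤ Real.log xj / Real.log (β j) := by
  obtain ⟨hΩ, hβ, hub⟩ := hΓ
  -- monotone facts along j ≤ k
  have key : ∀ m, j ≤ m → (∀ x ∈ Set.Icc (0:ℝ) 1, h m x ≤ h j x) ∧ β m ≤ β j := by
    intro m hm
    induction m, hm using Nat.le_induction with
    | base => exact ⟨fun x _ => le_rfl, le_rfl⟩
    | succ n hjn ih =>
      obtain ⟨ih1, ih2⟩ := ih
      obtain ⟨d1, d2⟩ := hdec n (hNj.trans hjn)
      exact ⟨fun x hx => (d1 x hx).trans (ih1 x hx), d2.trans ih2⟩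
  obtain ⟨hkj, hβkj⟩ := key k hjk
  have hxjI : xj ∈ Set.Icc (0:ℝ) 1 := ⟨hxj.1.le, hxj.2⟩
  have hxkI : xk ∈ Set.Icc (0:ℝ) 1 := ⟨hxk.1.le, hxk.2⟩
  have hxjk : xj ≤ xk := by
    have : h j xj ≤ h j xk := by
      rw [hhxj]
      exact (hujk.trans_eq hhxk.symm).trans (hkj xk hxkI)
    by_contra hlt
    exact absurd ((hΩ j).1 hxkI hxjI (lt_of_not_ge hlt)) (not_lt.mpr this)
  have hβj := hβ j
  have hβk := hβ k
  have hlogβj : Real.log (β j) < 0 := Real.log_neg hβj.1 hβj.2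
  have hlogβk : Real.log (β k) < 0 := Real.log_neg hβk.1 hβk.2
  have hlogβ : Real.log (β k) ≤ Real.log (β j) := Real.log_le_log hβk.1 hβkj
  have hlogxj : Real.log xj ≤ 0 := Real.log_nonpos hxj.1.le hxj.2
  have hlogx : Real.log xj ≤ Real.log xk := Real.log_le_log hxj.1 hxjk
  have : (-Real.log xk) / (-Real.log (β k)) ≤ (-Real.log xj) / (-Real.log (β j)) :=
    div_le_div₀ (by linarith) (by linarith) (by linarith) (by linarith)
  rw [neg_div_neg_eq, neg_div_neg_eq] at this
  exact this
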